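/- Let G be a finite DAG and S ⊆ V a prefix subset. Suppose w ∈ S̄ satisfies |Anc[w] ∩ src(S̄)| ≥ 2, say v₁ ≠ v₂ are both in Anc[w] ∩ src(S̄). Then v₁ and v₂ are d-separated given S but d-connected given S ∪ {w}. -/

import Mathlib

open Relation

/-- Undirected adjacency induced by a directed edge relation. -/
def Adjacent {V : Type*} (E : V → V → Prop) (a b : V) : Prop := E a b ∨ E b a

/-- `x` is a collider on the path (vertex list) `p`: both neighboring edges point into `x`. -/
def IsCollider {V : Type*} (E : V → V → Prop) (p : List V) (x : V) : Prop :=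
  ∃ l1 a b l2, p = l1 ++ a :: x :: b :: l2 ∧ E a x ∧ E b x

/-- A path (vertex list) is active given a conditioning set `C`:
every collider is in `C` or has a descendant in `C`, and no non-collider is in `C`. -/
def ActivePath {V : Type*} (E : V → V → Prop) (C : Set V) (p : List V) : Prop :=
  (∀ x ∈ p, IsCollider E p x → ∃ d, ReflTransGen E x d ∧ d ∈ C) ∧
  (∀ x ∈ p, ¬ IsCollider E p x → x ∉ C)

/-- `p` is a path between `u` and `v`: consecutively adjacent, distinct vertices. -/
def IsPathBetween {V : Type*} (E : V → V → Prop) (u v : V) (p : List V) : Prop :=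
  p.Chain' (Adjacent E) ∧ p.Nodup ∧ p.head? = some u ∧ p.getLast? = some v

/-- `u` and `v` are d-connected given `C`. -/
def DConn {V : Type*} (E : V → V → Prop) (C : Set V) (u v : V) : Prop :=
  ∃ p, IsPathBetween E u v p ∧ ActivePath E C p

/-- `u` and `v` are d-separated given `C`. -/
def DSep {V : Type*} (E : V → V → Prop) (C : Set V) (u v : V) : Prop :=
  ¬ DConn E C u v

/-- `S` is a prefix (ancestrally closed) subset. -/
def IsPrefixSet {V : Type*} (E : V → V → Prop) (S : Set V) : Prop :=
  ∀ u v, E u v → v ∈ S → u ∈ S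

/-- Source vertices of the induced subgraph on `T`: vertices of `T` with no parent in `T`. -/
def srcOf {V : Type*} (E : V → V → Prop) (T : Set V) : Set V :=
  {v | v ∈ T ∧ ∀ u, E u v → u ∉ T}

/-- The edge relation is acyclic. -/
def Acyclic {V : Type*} (E : V → V → Prop) : Prop :=
  ∀ v, ¬ TransGen E v v

/-- `p` is a directed path from `u` to `v` (all edges forward). -/
def DirPath {V : Type*} (E : V → V → Prop) (u v : V) (p : List V) : Prop :=
  p.Chain' E ∧ p.head? = some u ∧ p.getLast? = some v

section Helpers
variable {V : Type*} {E : V → V → Prop} {S : Set V}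

lemma rtg_compl_closed (hS : IsPrefixSet E S) {u v : V}
    (h : ReflTransGen E u v) (hu : u ∈ Sᶜ) : v ∈ Sᶜ := by
  induction h with
  | refl => exact hu
  | tail _ e ih => exact fun hv => ih (hS _ _ e hv)

lemma chain'_head_reaches :
    ∀ (p : List V) (h a : V), p.Chain' E → p.head? = some h → a ∈ p → ReflTransGen E h a
  | [], h, a, _, hh, _ => by simp at hh
  | [x], h, a, _, hh, ha => by
      simp at hh ha; subst hh; subst ha; exact .refl
  | x :: y :: t, h, a, hc, hh, ha => by
      simp only [List.head?_cons, Option.some.injEq] at hh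
      subst hh
      obtain ⟨hxy, hc'⟩ := List.isChain_cons_cons.mp hc
      rcases List.mem_cons.mp ha with rfl | ha'
      · exact .refl
      · exact ReflTransGen.head hxy (chain'_head_reaches (y :: t) y a hc' rfl ha')

lemma chain'_reaches_last :
    ∀ (p : List V) (z a : V), p.Chain' E → p.getLast? = some z → a ∈ p → ReflTransGen E a z
  | [], z, a, _, hz, _ => by simp at hz
  | [x], z, a, _, hz, ha => by
      simp at hz ha; subst hz; subst ha; exact .refl
  | x :: y :: t, z, a, hc, hz, ha => by
      rw [List.getLast?_cons_cons] at hz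
      obtain ⟨hxy, hc'⟩ := List.isChain_cons_cons.mp hc
      rcases List.mem_cons.mp ha with rfl | ha'
      · exact ReflTransGen.head hxy (chain'_reaches_last (y :: t) z y hc' hz (by simp))
      · exact chain'_reaches_last (y :: t) z a hc' hz ha'

lemma mem_of_getLast?' {p : List V} {z : V} (h : p.getLast? = some z) : z ∈ p := by
  cases p with
  | nil => simp at h
  | cons a t =>
      rw [List.getLast?_eq_getLast (by simp)] at h
      exact (Option.some.injEq _ _ ▸ h) ▸ List.getLast_mem _

lemma exists_nodup_dirpath (hacyc : Acyclic E) {v w : V} (h : ReflTransGen E v w) :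
    ∃ p : List V, p.Chain' E ∧ p.Nodup ∧ p.head? = some v ∧ p.getLast? = some w := by
  induction h using ReflTransGen.head_induction_on with
  | refl => exact ⟨[w], by simp; exact List.isChain_singleton w⟩
  | head e rtg ih =>
      rename_i a c
      obtain ⟨q, hc, hn, hh, hl⟩ := ih
      have hanq : a ∉ q := fun hmem =>
        hacyc a (TransGen.head' e (chain'_head_reaches q c a hc hh hmem))
      refine ⟨a :: q, ?_, by simp [hn, hanq], rfl, ?_⟩
      · refine List.isChain_cons.mpr ⟨fun y hy => ?_, hc⟩
        rw [hh, Option.mem_def, Option.some.injEq] at hy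
        subst hy; exact e
      · cases q with
        | nil => simp at hh
        | cons b t => rw [List.getLast?_cons_cons]; exact hl

lemma nodup_split_unique :
    ∀ (l1 : List V) {l2 r1 r2 : List V} {a : V},
      l1 ++ a :: r1 = l2 ++ a :: r2 → (l1 ++ a :: r1).Nodup → l1 = l2 ∧ r1 = r2
  | [], l2, r1, r2, a, heq, hn => by
      cases l2 with
      | nil => simpa using heq
      | cons b l2' =>
          simp only [List.nil_append, List.cons_append, List.cons.injEq] at heq
          obtain ⟨rfl, hr⟩ := heq
          exfalso
          have : a ∉ r1 := by simpa using (List.nodup_cons.mp hn).1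
          exact this (hr ▸ (by simp : a ∈ l2' ++ a :: r2))
  | c :: l1', l2, r1, r2, a, heq, hn => by
      cases l2 with
      | nil =>
          simp only [List.nil_append, List.cons_append, List.cons.injEq] at heq
          obtain ⟨h1, hr⟩ := heq
          subst h1
          exfalso
          exact (List.nodup_cons.mp hn).1 (by simp)
      | cons d l2' =>
          simp only [List.cons_append, List.cons.injEq] at heq
          obtain ⟨rfl, hr⟩ := heq
          obtain ⟨h1, h2⟩ := nodup_split_unique l1' hr (List.nodup_cons.mp (by simpa using hn)).2
          exact ⟨by rw [h1], h2⟩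

lemma isCollider_cons {p : List V} {x y : V} (h : IsCollider E p x) :
    IsCollider E (y :: p) x := by
  obtain ⟨l1, a, b, l2, hp, h1, h2⟩ := h
  exact ⟨y :: l1, a, b, l2, by rw [hp]; rfl, h1, h2⟩

lemma chain_forward :
    ∀ (l : List V) (a b : V), E a b → List.Chain' (Adjacent E) (a :: b :: l) →
      (∀ x ∈ a :: b :: l, ¬ IsCollider E (a :: b :: l) x) → List.Chain' E (a :: b :: l)
  | [], a, b, hab, _, _ => by exact List.isChain_pair.mpr hab
  | c :: l, a, b, hab, hch, hnc => by
      obtain ⟨_, h2⟩ := List.isChain_cons_cons.mp hch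
      obtain ⟨hbc, _⟩ := List.isChain_cons_cons.mp h2
      have hEbc : E b c := by
        rcases hbc with h | h
        · exact h
        · exact absurd ⟨[], a, c, l, rfl, hab, h⟩ (hnc b (by simp))
      exact List.isChain_cons_cons.mpr ⟨hab,
        chain_forward l b c hEbc h2 (fun x hx hcol => hnc x (List.mem_cons_of_mem _ hx) (isCollider_cons hcol))⟩

lemma exists_edge_to_last :
    ∀ (p : List V) (a b z : V), List.Chain' E (a :: b :: p) →
      (a :: b :: p).getLast? = some z → ∃ c ∈ a :: b :: p, E c z
  | [], a, b, z, hc, hz => by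
      simp at hz; subst hz
      exact ⟨a, by simp, (List.isChain_cons_cons.mp hc).1⟩
  | c :: p, a, b, z, hc, hz => by
      obtain ⟨d, hd, he⟩ := exists_edge_to_last p b c z (List.isChain_cons_cons.mp hc).2
        (by rw [List.getLast?_cons_cons] at hz; exact hz)
      exact ⟨d, List.mem_cons_of_mem _ hd, he⟩

lemma takeWhile_head {p : V → Bool} {l : List V} {a : V}
    (hh : l.head? = some a) (ha : p a = true) : (l.takeWhile p).head? = some a := by
  cases l with
  | nil => simp at hh
  | cons b t =>
      simp only [List.head?_cons, Option.some.injEq] at hh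
      subst hh
      simp [List.takeWhile_cons, ha]

end Helpers


/-- if `w ∈ S̄` has two distinct ancestors-or-self in `src(S̄)`, then those two
sources are d-separated given `S` but d-connected given `S ∪ {w}`. -/
theorem two_source_ancestors_vstructure {V : Type*} [Fintype V] (E : V → V → Prop)
    (hacyc : Acyclic E) (S : Set V) (hS : IsPrefixSet E S)
    (w : V) (hw : w ∉ S) (v₁ v₂ : V) (hne : v₁ ≠ v₂)
    (hv₁ : v₁ ∈ srcOf E Sᶜ) (hv₂ : v₂ ∈ srcOf E Sᶜ)
    (ha₁ : ReflTransGen E v₁ w) (ha₂ : ReflTransGen E v₂ w) :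
    DSep E S v₁ v₂ ∧ DConn E (S ∪ {w}) v₁ v₂ := by
  classical
  constructor
  · rintro ⟨p, ⟨hchain, hnodup, hhead, hlast⟩, hcol, hncol⟩
    have hnc : ∀ x ∈ p, ¬ IsCollider E p x := by
      intro x hx hcx
      obtain ⟨d, hxd, hdS⟩ := hcol x hx hcx
      obtain ⟨l1, a, b, l2, hp, hax, hbx⟩ := hcx
      have hxS : x ∈ S := by
        by_contra hxS
        exact rtg_compl_closed hS hxd hxS hdS
      have haS : a ∈ S := hS a x hax hxS
      have hamem : a ∈ p := by rw [hp]; simp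
      have hanc : ¬ IsCollider E p a := by
        rintro ⟨l1', a', b', l2', hp', ha'a, hb'a⟩
        have heq : l1 ++ a :: (x :: b :: l2) = (l1' ++ [a']) ++ a :: (b' :: l2') := by
          rw [← hp, hp']; simp
        obtain ⟨-, h2⟩ := nodup_split_unique l1 heq (hp ▸ hnodup)
        have hb'x : b' = x := by injection h2 with h _ ; exact h.symm
        exact hacyc a (TransGen.head hax (TransGen.single (hb'x ▸ hb'a)))
      exact hncol a hamem hanc haS
    have hallS : ∀ x ∈ p, x ∉ S := fun x hx => hncol x hx (hnc x hx)
    cases p with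
    | nil => simp at hhead
    | cons h1 t =>
      simp only [List.head?_cons, Option.some.injEq] at hhead
      subst hhead
      cases t with
      | nil =>
        simp only [List.getLast?_singleton, Option.some.injEq] at hlast
        exact hne hlast
      | cons u rest =>
        have hadj : Adjacent E h1 u := (List.isChain_cons_cons.mp hchain).1
        have hEv₁u : E h1 u := by
          rcases hadj with h | h
          · exact h
          · have huS : u ∈ S := by
              by_contra hus
              exact hv₁.2 u h hus
            exact absurd huS (hallS u (by simp))
        have hdir := chain_forward rest h1 u hEv₁u hchain hnc
        obtain ⟨c, hcmem, hce⟩ := exists_edge_to_last rest h1 u v₂ hdir hlast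
        exact hv₂.2 c hce (hallS c hcmem)
  · obtain ⟨p₁, hc1, hn1, hh1, hl1⟩ := exists_nodup_dirpath hacyc ha₁
    obtain ⟨p₂, hc2, hn2, hh2, hl2⟩ := exists_nodup_dirpath hacyc ha₂
    have hp1S : ∀ y ∈ p₁, y ∉ S := fun y hy =>
      rtg_compl_closed hS (chain'_head_reaches p₁ v₁ y hc1 hh1 hy) hv₁.1
    have hp2S : ∀ y ∈ p₂, y ∉ S := fun y hy =>
      rtg_compl_closed hS (chain'_head_reaches p₂ v₂ y hc2 hh2 hy) hv₂.1
    have hp1w : ∀ y ∈ p₁, ReflTransGen E y w := fun y hy =>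
      chain'_reaches_last p₁ w y hc1 hl1 hy
    have hp2w : ∀ y ∈ p₂, ReflTransGen E y w := fun y hy =>
      chain'_reaches_last p₂ w y hc2 hl2 hy
    have hwp1 : w ∈ p₁ := mem_of_getLast?' hl1
    have hwp2 : w ∈ p₂ := mem_of_getLast?' hl2
    have hv1np2 : v₁ ∉ p₂ := by
      intro hm
      rcases (chain'_head_reaches p₂ v₂ v₁ hc2 hh2 hm).cases_tail with h | ⟨u, hu, he⟩
      · exact hne h
      · exact hv₁.2 u he (rtg_compl_closed hS hu hv₂.1)
    set pr1 : V → Bool := fun y => !decide (y ∈ p₂) with hpr1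
    set t := p₁.takeWhile pr1 with ht
    set d := p₁.dropWhile pr1 with hd
    have hdne : d ≠ [] := by
      intro h
      have := List.dropWhile_eq_nil_iff.mp h w hwp1
      simp [hpr1, hwp2] at this
    set x := d.head hdne with hx
    have hxp2 : x ∈ p₂ := by
      have := List.head_dropWhile_not pr1 hdne
      simpa [hpr1] using this
    have htd : t ++ d = p₁ := List.takeWhile_append_dropWhile
    have ha1p : t ++ x :: d.tail = p₁ := by
      rw [hx, List.cons_head_tail hdne, htd]
    have ha1pre : (t ++ [x]) <+: p₁ := ⟨d.tail, by simpa using ha1p⟩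
    have hc_a1 : (t ++ [x]).Chain' E := hc1.infix ha1pre.isInfix
    have hn_a1 : (t ++ [x]).Nodup := hn1.sublist ha1pre.sublist
    have ht_head : t.head? = some v₁ := takeWhile_head hh1 (by simp [hpr1, hv1np2])
    have htne : t ≠ [] := by intro h; rw [h] at ht_head; simp at ht_head
    have hxp1 : x ∈ p₁ := ha1pre.subset (by simp)
    have hxv2 : x ≠ v₂ := by
      intro h
      rcases (chain'_head_reaches p₁ v₁ x hc1 hh1 hxp1).cases_tail with h' | ⟨u, hu, he⟩
      · exact hne (h'.symm.trans h)
      · exact hv₂.2 u (h ▸ he) (rtg_compl_closed hS hu hv₁.1)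
    set pr2 : V → Bool := fun y => !decide (y = x) with hpr2
    set t₂ := p₂.takeWhile pr2 with ht2
    set d₂ := p₂.dropWhile pr2 with hd2
    have hd2ne : d₂ ≠ [] := by
      intro h
      have := List.dropWhile_eq_nil_iff.mp h x hxp2
      simp [hpr2] at this
    have hd2head : d₂.head hd2ne = x := by
      have := List.head_dropWhile_not pr2 hd2ne
      simpa [hpr2] using this
    have htd2 : t₂ ++ d₂ = p₂ := List.takeWhile_append_dropWhile
    have ha2p : t₂ ++ x :: d₂.tail = p₂ := by
      rw [← hd2head, List.cons_head_tail hd2ne, htd2]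
    have ha2pre : (t₂ ++ [x]) <+: p₂ := ⟨d₂.tail, by simpa using ha2p⟩
    have hc_a2 : (t₂ ++ [x]).Chain' E := hc2.infix ha2pre.isInfix
    have ht2_head : t₂.head? = some v₂ := by
      refine takeWhile_head hh2 ?_
      simp [hpr2]
      exact fun h => hxv2 h.symm
    have ht2ne : t₂ ≠ [] := by intro h; rw [h] at ht2_head; simp at ht2_head
    have ht2sub : ∀ y ∈ t₂, y ∈ p₂ := fun y hy => (List.takeWhile_prefix pr2).subset hy
    have htniw : ∀ y ∈ t, y ∉ p₂ := by
      intro y hy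
      have := List.mem_takeWhile_imp hy
      simpa [hpr1] using this
    have ht2nx : ∀ y ∈ t₂, y ≠ x := by
      intro y hy
      have := List.mem_takeWhile_imp hy
      simpa [hpr2] using this
    have hEbx : E (t₂.getLast ht2ne) x := by
      have h3 := (List.isChain_append.mp hc_a2).2.2
      exact h3 _ (by rw [List.getLast?_eq_getLast ht2ne]; rfl) x rfl
    have hEax : E (t.getLast htne) x := by
      have h3 := (List.isChain_append.mp hc_a1).2.2
      exact h3 _ (by rw [List.getLast?_eq_getLast htne]; rfl) x rfl
    set q := (t ++ [x]) ++ t₂.reverse with hq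
    have hq_head : q.head? = some v₁ := by
      rw [hq, List.head?_append, List.head?_append, ht_head]; rfl
    have hq_last : q.getLast? = some v₂ := by
      rw [hq, List.getLast?_append, List.getLast?_reverse, ht2_head]; rfl
    have hn_t2r : t₂.reverse.Nodup := by
      rw [List.nodup_reverse]
      exact hn2.sublist (List.takeWhile_prefix pr2).sublist
    have hq_nodup : q.Nodup := by
      rw [hq, List.nodup_append']
      refine ⟨hn_a1, hn_t2r, ?_⟩
      intro y hy1 hy2
      have hy2' : y ∈ t₂ := List.mem_reverse.mp hy2
      rcases List.mem_append.mp hy1 with h | h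
      · exact htniw y h (ht2sub y hy2')
      · exact ht2nx y hy2' (by simpa using h)
    have hq_chain : q.Chain' (Adjacent E) := by
      rw [hq]; show List.IsChain (Adjacent E) _; rw [List.isChain_append]
      refine ⟨hc_a1.imp (fun a b h => Or.inl h), ?_, ?_⟩
      · rw [List.isChain_reverse]
        exact (hc2.infix (List.takeWhile_prefix pr2).isInfix).imp (fun a b h => Or.inr h)
      · intro y hy z hz
        have hyx : x = y := by
          rw [Option.mem_def, List.getLast?_append] at hy
          simpa using hy
        have hz' : t₂.getLast ht2ne = z := by
          rw [Option.mem_def, List.head?_reverse, List.getLast?_eq_getLast ht2ne] at hz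
          simpa using hz
        rw [← hyx, ← hz']
        exact Or.inr hEbx
    have hcolx : IsCollider E q x := by
      refine ⟨t.dropLast, t.getLast htne, t₂.getLast ht2ne, t₂.dropLast.reverse, ?_, hEax, hEbx⟩
      rw [hq]
      conv_lhs => rw [← List.dropLast_append_getLast htne, ← List.dropLast_append_getLast ht2ne]
      simp [List.reverse_append]
    refine ⟨q, ⟨hq_chain, hq_nodup, hq_head, hq_last⟩, ?_, ?_⟩
    · intro y hy _
      refine ⟨w, ?_, Or.inr rfl⟩
      rw [hq] at hy
      rcases List.mem_append.mp hy with h | h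
      · exact hp1w y (ha1pre.subset h)
      · exact hp2w y (ht2sub y (List.mem_reverse.mp h))
    · intro y hy hnotcol
      rw [hq] at hy
      by_cases hyx : y = x
      · exact absurd hcolx (hyx ▸ hnotcol)
      rcases List.mem_append.mp hy with h | h
      · rcases List.mem_append.mp h with h' | h'
        · intro hyC
          rcases hyC with hyS | hyw
          · exact hp1S y ((List.takeWhile_prefix pr1).subset h') hyS
          · have hyw' : y = w := hyw
            exact htniw y h' (by rw [hyw']; exact hwp2)
        · simp at h'
          exact absurd h' hyx
      · have hy2 : y ∈ t₂ := List.mem_reverse.mp h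
        intro hyC
        rcases hyC with hyS | hyw
        · exact hp2S y (ht2sub y hy2) hyS
        · have hyw' : y = w := hyw
          have hwd2 : w ∈ d₂ := by
            have hh := hl2
            rw [← htd2, List.getLast?_append, List.getLast?_eq_getLast hd2ne] at hh
            simp at hh
            exact hh ▸ List.getLast_mem hd2ne
          have hn2' : (t₂ ++ d₂).Nodup := by rw [htd2]; exact hn2
          exact (List.nodup_append'.mp hn2').2.2 (by rw [hyw'] at hy2; exact hy2) hwd2
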